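/- Weighted trace inequality with entropy weight: Define Λ : [0,∞) → [0,∞) by Λ(u) = ∫₀^u √(max(log s, 0)) ds (so Λ(0)=0 and Λ'(u) = (log u)₊^{1/2}). Let n : [0,∞) → (0,∞) be a C¹ function such that n, n(log n)₊ and z ↦ n'(z)²/n(z) are integrable on (0,∞) and n(z) → 0 as z → ∞. Then Λ(n(0))² ≤ (∫₀^∞ n(z)(log n(z))₊ dz) · (∫₀^∞ n'(z)²/n(z) dz). -/

import Mathlib

open MeasureTheory Set Filter

lemma cont_logplus : Continuous (fun s : ℝ => max (Real.log s) 0) := by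
  rw [continuous_iff_continuousAt]
  intro x
  rcases eq_or_ne x 0 with rfl | hx
  · have h : (fun _ : ℝ => (0:ℝ)) =ᶠ[nhds (0:ℝ)] fun s => max (Real.log s) 0 := by
      filter_upwards [Metric.ball_mem_nhds (0:ℝ) one_pos] with s hs
      rcases eq_or_ne s 0 with rfl | hs0
      · simp [Real.log_zero]
      · have : |s| < 1 := by simpa [Real.dist_eq] using hs
        have hlog : Real.log s < 0 := by
          rw [← Real.log_abs]
          exact Real.log_neg (abs_pos.mpr hs0) this
        simp [max_eq_right hlog.le]
    exact continuousAt_const.congr h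
  · exact ((Real.continuousAt_log hx).max continuousAt_const)

lemma cont_sqrt_logplus : Continuous (fun s : ℝ => Real.sqrt (max (Real.log s) 0)) :=
  Real.continuous_sqrt.comp cont_logplus

/-- Weighted trace inequality with entropy weight: with
`Λ(u) = ∫₀^u √((log s)₊) ds`, a positive C¹ function `n` on `[0,∞)` with
`n`, `n (log n)₊` and `n'²/n` integrable and `n → 0` at infinity satisfies
`Λ(n(0))² ≤ (∫ n (log n)₊) · (∫ n'²/n)`. -/
theorem weighted_trace_inequality
    (n n' : ℝ → ℝ)
    (hpos : ∀ z : ℝ, 0 ≤ z → 0 < n z)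
    (hderiv : ∀ z : ℝ, 0 ≤ z → HasDerivAt n (n' z) z)
    (hcont : ContinuousOn n' (Ici 0))
    (hint : IntegrableOn n (Ioi 0))
    (hentplus : IntegrableOn (fun z => n z * max (Real.log (n z)) 0) (Ioi 0))
    (hfisher : IntegrableOn (fun z => (n' z) ^ 2 / n z) (Ioi 0))
    (hlim : Tendsto n atTop (nhds 0)) :
    (∫ s in (0:ℝ)..(n 0), Real.sqrt (max (Real.log s) 0)) ^ 2
      ≤ (∫ z in Ioi (0:ℝ), n z * max (Real.log (n z)) 0)
          * ∫ z in Ioi (0:ℝ), (n' z) ^ 2 / n z := by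
  set g : ℝ → ℝ := fun s => Real.sqrt (max (Real.log s) 0) with hg_def
  have hg : Continuous g := cont_sqrt_logplus
  have hg_nonneg : ∀ s, 0 ≤ g s := fun s => Real.sqrt_nonneg _
  set Φ : ℝ → ℝ := fun u => ∫ s in (0:ℝ)..u, g s with hΦ_def
  have hΦderiv : ∀ u : ℝ, HasDerivAt Φ (g u) u := fun u =>
    (hg.integral_hasStrictDerivAt 0 u).hasDerivAt
  have hΦcont : Continuous Φ :=
    continuous_iff_continuousAt.mpr fun u => (hΦderiv u).continuousAt
  -- continuity of n on Ici 0
  have hncont : ContinuousOn n (Ici 0) := fun z hz =>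
    (hderiv z hz).continuousAt.continuousWithinAt
  -- chain rule
  set F' : ℝ → ℝ := fun z => g (n z) * n' z with hF'_def
  have hFderiv : ∀ z ∈ Ici (0:ℝ), HasDerivAt (fun z => Φ (n z)) (F' z) z := by
    intro z hz
    exact (hΦderiv (n z)).comp z (hderiv z hz)
  -- measurability of F' on Ioi 0
  have hF'cont : ContinuousOn F' (Ici 0) :=
    ((hg.comp_continuousOn hncont).mul hcont)
  have hF'meas : AEStronglyMeasurable F' (volume.restrict (Ioi (0:ℝ))) :=
    (hF'cont.mono Ioi_subset_Ici_self).aestronglyMeasurable measurableSet_Ioi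
  -- pointwise bound
  have hbound : ∀ z ∈ Ioi (0:ℝ),
      ‖F' z‖ ≤ (n z * max (Real.log (n z)) 0 + (n' z) ^ 2 / n z) / 2 := by
    intro z hz
    have hnz : 0 < n z := hpos z (le_of_lt hz)
    have hsq : g (n z) ^ 2 = max (Real.log (n z)) 0 :=
      Real.sq_sqrt (le_max_right _ _)
    have key : g (n z) * |n' z|
        = (g (n z) * Real.sqrt (n z)) * (|n' z| / Real.sqrt (n z)) := by
      field_simp
    have hAM : (g (n z) * Real.sqrt (n z)) * (|n' z| / Real.sqrt (n z))
        ≤ ((g (n z) * Real.sqrt (n z)) ^ 2 + (|n' z| / Real.sqrt (n z)) ^ 2) / 2 := by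
      nlinarith [sq_nonneg (g (n z) * Real.sqrt (n z) - |n' z| / Real.sqrt (n z))]
    have h1 : (g (n z) * Real.sqrt (n z)) ^ 2 = n z * max (Real.log (n z)) 0 := by
      rw [mul_pow, hsq, Real.sq_sqrt hnz.le]; ring
    have h2 : (|n' z| / Real.sqrt (n z)) ^ 2 = (n' z) ^ 2 / n z := by
      rw [div_pow, sq_abs, Real.sq_sqrt hnz.le]
    calc ‖F' z‖ = g (n z) * |n' z| := by
          rw [hF'_def]; simp [abs_mul, abs_of_nonneg (hg_nonneg (n z))]
      _ ≤ ((g (n z) * Real.sqrt (n z)) ^ 2 + (|n' z| / Real.sqrt (n z)) ^ 2) / 2 :=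
          key ▸ hAM
      _ = (n z * max (Real.log (n z)) 0 + (n' z) ^ 2 / n z) / 2 := by rw [h1, h2]
  have hF'int : IntegrableOn F' (Ioi 0) := by
    refine Integrable.mono' ((hentplus.add hfisher).div_const 2) hF'meas ?_
    filter_upwards [ae_restrict_mem measurableSet_Ioi] with z hz
    exact hbound z hz
  -- limit of Φ ∘ n at infinity
  have hΦ0 : Φ 0 = 0 := by simp [hΦ_def]
  have hFlim : Tendsto (fun z => Φ (n z)) atTop (nhds 0) := by
    rw [← hΦ0]
    exact (hΦcont.continuousAt.tendsto).comp hlim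
  have hFTC : ∫ z in Ioi (0:ℝ), F' z = 0 - Φ (n 0) :=
    integral_Ioi_of_hasDerivAt_of_tendsto' hFderiv hF'int hFlim
  -- so Λ(n 0) ≤ ∫ |F'|
  have hΛle : Φ (n 0) ≤ ∫ z in Ioi (0:ℝ), g (n z) * |n' z| := by
    have h1 : Φ (n 0) = -∫ z in Ioi (0:ℝ), F' z := by rw [hFTC]; ring
    have h2 : -∫ z in Ioi (0:ℝ), F' z ≤ |∫ z in Ioi (0:ℝ), F' z| := neg_le_abs _
    have h3 : |∫ z in Ioi (0:ℝ), F' z| ≤ ∫ z in Ioi (0:ℝ), ‖F' z‖ := by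
      rw [← Real.norm_eq_abs]
      exact norm_integral_le_integral_norm _
    have h4 : ∫ z in Ioi (0:ℝ), ‖F' z‖ = ∫ z in Ioi (0:ℝ), g (n z) * |n' z| := by
      refine integral_congr_ae ?_
      filter_upwards with z
      simp [hF'_def, abs_mul, abs_of_nonneg (hg_nonneg (n z))]
    linarith
  -- Cauchy–Schwarz
  set f₁ : ℝ → ℝ := fun z => |n' z| / Real.sqrt (n z) with hf₁_def
  set f₂ : ℝ → ℝ := fun z => Real.sqrt (n z) * g (n z) with hf₂_def
  have hsqrtn_cont : ContinuousOn (fun z => Real.sqrt (n z)) (Ici 0) :=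
    Real.continuous_sqrt.comp_continuousOn hncont
  have hf₁meas : AEStronglyMeasurable f₁ (volume.restrict (Ioi (0:ℝ))) := by
    refine ContinuousOn.aestronglyMeasurable ?_ measurableSet_Ioi
    refine ((hcont.abs).div hsqrtn_cont ?_).mono Ioi_subset_Ici_self
    intro z hz
    exact (Real.sqrt_pos.mpr (hpos z hz)).ne'
  have hf₂meas : AEStronglyMeasurable f₂ (volume.restrict (Ioi (0:ℝ))) := by
    refine ContinuousOn.aestronglyMeasurable ?_ measurableSet_Ioi
    exact (hsqrtn_cont.mul (hg.comp_continuousOn hncont)).mono Ioi_subset_Ici_self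
  have hf₁sq : ∀ z ∈ Ioi (0:ℝ), f₁ z ^ 2 = (n' z) ^ 2 / n z := by
    intro z hz
    rw [hf₁_def]
    simp only
    rw [div_pow, sq_abs, Real.sq_sqrt (hpos z (le_of_lt hz)).le]
  have hf₂sq : ∀ z ∈ Ioi (0:ℝ), f₂ z ^ 2 = n z * max (Real.log (n z)) 0 := by
    intro z hz
    rw [hf₂_def]
    simp only
    rw [mul_pow, Real.sq_sqrt (hpos z (le_of_lt hz)).le,
      Real.sq_sqrt (le_max_right _ _)]
  have hf₁sq_int : Integrable (fun z => f₁ z ^ 2) (volume.restrict (Ioi (0:ℝ))) := by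
    refine hfisher.congr ?_
    filter_upwards [ae_restrict_mem measurableSet_Ioi] with z hz
    exact (hf₁sq z hz).symm
  have hf₂sq_int : Integrable (fun z => f₂ z ^ 2) (volume.restrict (Ioi (0:ℝ))) := by
    refine hentplus.congr ?_
    filter_upwards [ae_restrict_mem measurableSet_Ioi] with z hz
    exact (hf₂sq z hz).symm
  have hf₁memℒp : MemLp f₁ (ENNReal.ofReal 2) (volume.restrict (Ioi (0:ℝ))) := by
    have : ENNReal.ofReal 2 = 2 := by norm_num
    rw [this]
    exact (memLp_two_iff_integrable_sq hf₁meas).mpr hf₁sq_int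
  have hf₂memℒp : MemLp f₂ (ENNReal.ofReal 2) (volume.restrict (Ioi (0:ℝ))) := by
    have : ENNReal.ofReal 2 = 2 := by norm_num
    rw [this]
    exact (memLp_two_iff_integrable_sq hf₂meas).mpr hf₂sq_int
  have hconj : Real.HolderConjugate 2 2 := Real.holderConjugate_iff.mpr ⟨one_lt_two, by norm_num⟩
  have hf₁nn : 0 ≤ᵐ[volume.restrict (Ioi (0:ℝ))] f₁ := by
    filter_upwards with z
    exact div_nonneg (abs_nonneg _) (Real.sqrt_nonneg _)
  have hf₂nn : 0 ≤ᵐ[volume.restrict (Ioi (0:ℝ))] f₂ := by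
    filter_upwards with z
    exact mul_nonneg (Real.sqrt_nonneg _) (hg_nonneg _)
  have hCS := integral_mul_le_Lp_mul_Lq_of_nonneg hconj hf₁nn hf₂nn hf₁memℒp hf₂memℒp
  -- identify the pieces
  set A : ℝ := ∫ z in Ioi (0:ℝ), n z * max (Real.log (n z)) 0 with hA_def
  set B : ℝ := ∫ z in Ioi (0:ℝ), (n' z) ^ 2 / n z with hB_def
  have hA_nonneg : 0 ≤ A := by
    refine setIntegral_nonneg measurableSet_Ioi fun z hz => ?_
    exact mul_nonneg (hpos z (le_of_lt hz)).le (le_max_right _ _)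
  have hB_nonneg : 0 ≤ B := by
    refine setIntegral_nonneg measurableSet_Ioi fun z hz => ?_
    exact div_nonneg (sq_nonneg _) (hpos z (le_of_lt hz)).le
  have hprod : ∫ z in Ioi (0:ℝ), f₁ z * f₂ z = ∫ z in Ioi (0:ℝ), g (n z) * |n' z| := by
    refine setIntegral_congr_fun measurableSet_Ioi fun z hz => ?_
    have hnz : 0 < Real.sqrt (n z) := Real.sqrt_pos.mpr (hpos z (le_of_lt hz))
    rw [hf₁_def, hf₂_def]
    simp only
    field_simp
  have hint₁ : ∫ z in Ioi (0:ℝ), f₁ z ^ (2:ℝ) = B := by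
    rw [hB_def]
    refine setIntegral_congr_fun measurableSet_Ioi fun z hz => ?_
    rw [show ((2:ℝ)) = ((2:ℕ):ℝ) by norm_num, Real.rpow_natCast]
    exact hf₁sq z hz
  have hint₂ : ∫ z in Ioi (0:ℝ), f₂ z ^ (2:ℝ) = A := by
    rw [hA_def]
    refine setIntegral_congr_fun measurableSet_Ioi fun z hz => ?_
    rw [show ((2:ℝ)) = ((2:ℕ):ℝ) by norm_num, Real.rpow_natCast]
    exact hf₂sq z hz
  rw [hint₁, hint₂, hprod] at hCS
  have hΦnn : 0 ≤ Φ (n 0) :=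
    intervalIntegral.integral_nonneg (hpos 0 le_rfl).le fun s _ => hg_nonneg s
  have hmain : Φ (n 0) ≤ B ^ ((1:ℝ)/2) * A ^ ((1:ℝ)/2) := le_trans hΛle hCS
  have hsq : (B ^ ((1:ℝ)/2) * A ^ ((1:ℝ)/2)) ^ 2 = A * B := by
    rw [mul_pow, ← Real.rpow_natCast (B ^ ((1:ℝ)/2)) 2, ← Real.rpow_natCast (A ^ ((1:ℝ)/2)) 2,
      ← Real.rpow_mul hB_nonneg, ← Real.rpow_mul hA_nonneg]
    norm_num
    ring
  calc (∫ s in (0:ℝ)..(n 0), Real.sqrt (max (Real.log s) 0)) ^ 2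
      = Φ (n 0) ^ 2 := rfl
    _ ≤ (B ^ ((1:ℝ)/2) * A ^ ((1:ℝ)/2)) ^ 2 := by
        apply pow_le_pow_left₀ hΦnn hmain
    _ = A * B := hsq
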